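/- arXiv:1301.1574 — 3 statements merged into one kernel-verified Lean document; each statement's English description precedes it below -/
import Mathlib

section
/- For every square-free integer N > 1, any parabolic element of the group Γ₀(N)⁺ fixes a point that is Γ₀(N)⁺-equivalent to i∞; in particular, if v divides N and w = N/v, then there exist integers a, b with -a·w - b·v = 1, and the matrix (1/√w)·[[a·w, b],[N, -w]] belongs to Γ₀(N)⁺ and maps the cusp 1/v to i∞. -/
/-- Membership in the moonshine group `Γ₀(N)⁺`, viewed as a set of real 2×2 matrices. -/
def Gamma0Plus (N : ℕ) : Set (Matrix (Fin 2) (Fin 2) ℝ) :=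
  {M | ∃ a b c d e : ℤ, 0 < e ∧ a * d - b * c = e ∧ e ∣ (N : ℤ) ∧ e ∣ a ∧ e ∣ d ∧
    (N : ℤ) ∣ c ∧ M = (Real.sqrt e)⁻¹ • !![(a : ℝ), (b : ℝ); (c : ℝ), (d : ℝ)]}

/-- For square-free `N > 1` and `v ∣ N` with `w = N/v`, there exist integers `a, b` with
`-a·w - b·v = 1` such that `(1/√w)·[[a·w, b],[N, -w]] ∈ Γ₀(N)⁺` and this matrix maps the
cusp `1/v` to `i∞` (its bottom row annihilates `1/v`). -/
theorem cusp_one_div_v_equivalent_infinity (N : ℕ) (hN : Squarefree N) (hN1 : 1 < N)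
    (v : ℕ) (hv : v ∣ N) (hvpos : 0 < v) :
    ∃ a b : ℤ, -a * (N / v : ℕ) - b * v = 1 ∧
      (Real.sqrt (N / v : ℕ))⁻¹ •
          !![(a * (N / v : ℕ) : ℝ), (b : ℝ); (N : ℝ), -((N / v : ℕ) : ℝ)] ∈ Gamma0Plus N ∧
      (N : ℝ) * (1 / v) + -((N / v : ℕ) : ℝ) = 0 := by
  set w : ℕ := N / v with hwdef
  have hvw : v * w = N := Nat.mul_div_cancel' hv
  have hNpos : 0 < N := by omega
  have hwpos : 0 < w := by
    rcases Nat.eq_zero_or_pos w with h | h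
    · rw [h, Nat.mul_zero] at hvw; omega
    · exact h
  have hcop : Nat.Coprime v w := Nat.coprime_of_squarefree_mul (hvw ▸ hN)
  have hcop' : IsCoprime (w : ℤ) (v : ℤ) :=
    Int.isCoprime_iff_gcd_eq_one.mpr (by
      simpa [Int.gcd_natCast_natCast] using hcop.symm)
  obtain ⟨x, y, hxy⟩ := hcop'
  refine ⟨-x, -y, ?_, ?_, ?_⟩
  · linarith
  · refine ⟨-x * w, -y, (N : ℤ), -(w : ℤ), (w : ℤ), by exact_mod_cast hwpos, ?_, ?_, ?_, ?_, ?_, ?_⟩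
    · have hN' : (N : ℤ) = (v : ℤ) * w := by exact_mod_cast hvw.symm
      rw [hN']; ring_nf; nlinarith [hxy]
    · exact ⟨(v : ℤ), by push_cast [← hvw]; ring⟩
    · exact Dvd.intro_left _ rfl
    · exact ⟨-1, by ring⟩
    · exact dvd_refl _
    · push_cast
      rfl
  · have hNR : (N : ℝ) = (v : ℝ) * w := by exact_mod_cast hvw.symm
    have hvR : (v : ℝ) ≠ 0 := by exact_mod_cast hvpos.ne'
    rw [hNR]
    field_simp
    ring
end

section
/- For a square-free positive integer N = p₁⋯p_r (distinct primes p_j) and complex s with Re(s) > 1, the Dirichlet series H_N(s) = ∑_{v | N} ∑_{n ≥ 1, gcd(n,v)=1} φ((N/v)·n) / ((N/v)·√v·n)^{2s} satisfies H_N(s) = (ζ(2s−1)/ζ(2s)) · N^{−s} · ∏_{j=1}^{r} (p_j^s + p_j)/(p_j^s + 1). -/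
open Complex Finset

namespace HNaux

lemma natCast_mul_cpow (a b : ℕ) (z : ℂ) :
    ((a * b : ℕ) : ℂ) ^ z = (a : ℂ) ^ z * (b : ℂ) ^ z := by
  simpa only [Nat.cast_mul, ofReal_natCast]
    using mul_cpow_ofReal_nonneg a.cast_nonneg b.cast_nonneg z

noncomputable def f (N : ℕ) (s : ℂ) (m : ℕ) : ℂ :=
  (Nat.totient m : ℂ) * (Nat.gcd m N : ℂ) ^ s * (m : ℂ) ^ (-(2 * s))

lemma f_zero (N : ℕ) (s : ℂ) : f N s 0 = 0 := by simp [f]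

lemma f_one (N : ℕ) (s : ℂ) : f N s 1 = 1 := by simp [f]

lemma f_mul (N : ℕ) (s : ℂ) {m n : ℕ} (h : Nat.Coprime m n) :
    f N s (m * n) = f N s m * f N s n := by
  unfold f
  rw [Nat.totient_mul h, Nat.gcd_comm (m * n) N, Nat.Coprime.gcd_mul N h,
    Nat.gcd_comm N m, Nat.gcd_comm N n, Nat.cast_mul, natCast_mul_cpow,
    natCast_mul_cpow]
  ring

lemma f_norm_summable {N : ℕ} (hN : N ≠ 0) {s : ℂ} (hs : 1 < s.re) :
    Summable (fun m ↦ ‖f N s m‖) := by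
  have hsum : Summable (fun m : ℕ ↦ (N : ℝ) ^ s.re * (m : ℝ) ^ (1 - 2 * s.re)) := by
    apply Summable.mul_left
    rw [Real.summable_nat_rpow]
    linarith
  apply hsum.of_nonneg_of_le (fun m ↦ norm_nonneg _)
  intro m
  rcases Nat.eq_zero_or_pos m with rfl | hm
  · rw [f_zero, norm_zero]
    positivity
  have h1 : ‖(Nat.totient m : ℂ)‖ ≤ (m : ℝ) := by
    rw [norm_natCast]
    exact_mod_cast Nat.totient_le m
  have h2 : ‖(Nat.gcd m N : ℂ) ^ s‖ ≤ (N : ℝ) ^ s.re := by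
    rw [norm_natCast_cpow_of_pos (Nat.gcd_pos_of_pos_left N hm)]
    apply Real.rpow_le_rpow (by positivity) _ (by linarith)
    exact_mod_cast Nat.le_of_dvd (Nat.pos_of_ne_zero hN) (Nat.gcd_dvd_right m N)
  have h3 : ‖(m : ℂ) ^ (-(2 * s))‖ = (m : ℝ) ^ (-(2 * s.re)) := by
    rw [norm_natCast_cpow_of_pos hm]
    congr 1
    simp [mul_re]
  calc ‖f N s m‖ = ‖(Nat.totient m : ℂ)‖ * ‖(Nat.gcd m N : ℂ) ^ s‖ * ‖(m : ℂ) ^ (-(2 * s))‖ := by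
        simp [f]
    _ ≤ (m : ℝ) * (N : ℝ) ^ s.re * (m : ℝ) ^ (-(2 * s.re)) := by
        rw [h3]
        have h0 : (0:ℝ) ≤ (m : ℝ) ^ (-(2 * s.re)) := by positivity
        exact mul_le_mul (mul_le_mul h1 h2 (norm_nonneg _) (by positivity)) le_rfl h0
          (by positivity)
    _ = (N : ℝ) ^ s.re * (m : ℝ) ^ (1 - 2 * s.re) := by
        rw [show (1 - 2 * s.re) = 1 + (-(2 * s.re)) by ring,
          Real.rpow_add (by exact_mod_cast hm) , Real.rpow_one]
        ring

lemma natCast_pow_cpow (p e : ℕ) (z : ℂ) :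
    ((p ^ e : ℕ) : ℂ) ^ z = ((p : ℂ) ^ z) ^ e := by
  induction e with
  | zero => simp
  | succ e ih => rw [pow_succ, natCast_mul_cpow, ih, pow_succ]

lemma totient_key {p : ℕ} (hp : p.Prime) (x : ℂ) (e : ℕ) :
    (Nat.totient (p ^ e) : ℂ) * x ^ e
      = (1 - (p : ℂ)⁻¹) * ((p : ℂ) * x) ^ e + (if e = 0 then (p : ℂ)⁻¹ else 0) := by
  have hP : (p : ℂ) ≠ 0 := Nat.cast_ne_zero.mpr hp.pos.ne'
  cases e with
  | zero => simp [sub_mul, inv_mul_cancel₀ hP]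
  | succ e =>
    rw [Nat.totient_prime_pow hp (Nat.succ_pos e)]
    have hcast : ((p ^ (e + 1 - 1) * (p - 1) : ℕ) : ℂ) = (p : ℂ) ^ e * ((p : ℂ) - 1) := by
      push_cast [Nat.cast_sub hp.one_lt.le]
      ring
    rw [hcast]
    simp only [Nat.succ_ne_zero, if_false, add_zero, mul_pow]
    field_simp
    ring

lemma summable_totient_geom {p : ℕ} (hp : p.Prime) {x : ℂ} (hx : ‖(p : ℂ) * x‖ < 1) :
    Summable (fun e : ℕ ↦ (Nat.totient (p ^ e) : ℂ) * x ^ e) := by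
  rw [funext (totient_key hp x)]
  exact ((summable_geometric_of_norm_lt_one hx).mul_left _).add
    (summable_of_ne_finset_zero (s := {0}) (by intro e he; simp at he; simp [he]))

lemma tsum_totient_geom {p : ℕ} (hp : p.Prime) {x : ℂ} (hx : ‖(p : ℂ) * x‖ < 1) :
    ∑' e : ℕ, (Nat.totient (p ^ e) : ℂ) * x ^ e = (1 - x) / (1 - (p : ℂ) * x) := by
  have hP : (p : ℂ) ≠ 0 := Nat.cast_ne_zero.mpr hp.pos.ne'
  have hpx : (1 : ℂ) - (p : ℂ) * x ≠ 0 := by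
    intro h
    rw [sub_eq_zero] at h
    rw [← h] at hx
    simp at hx
  rw [tsum_congr (totient_key hp x), Summable.tsum_add ((summable_geometric_of_norm_lt_one hx).mul_left _)
      (summable_of_ne_finset_zero (s := {0}) (by intro e he; simp at he; simp [he])),
    tsum_mul_left, tsum_geometric_of_norm_lt_one hx, tsum_ite_eq]
  field_simp
  ring

lemma gcd_prime_pow_squarefree {N p e : ℕ} (hN : Squarefree N) (hp : p.Prime)
    (hdvd : p ∣ N) (he : e ≠ 0) : Nat.gcd (p ^ e) N = p := by
  have h1 : p ∣ Nat.gcd (p ^ e) N := Nat.dvd_gcd (dvd_pow_self p he) hdvd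
  obtain ⟨k, hk, hkeq⟩ := (Nat.dvd_prime_pow hp).mp (Nat.gcd_dvd_left (p ^ e) N)
  have hk1 : 1 ≤ k := by
    rcases Nat.eq_zero_or_pos k with rfl | h
    · rw [pow_zero] at hkeq
      rw [hkeq] at h1
      exact absurd (Nat.dvd_one.mp h1) hp.one_lt.ne'
    · exact h
  have hk2 : k ≤ 1 := by
    by_contra h
    push_neg at h
    have hpp : p * p ∣ N := by
      refine dvd_trans ?_ (hkeq ▸ Nat.gcd_dvd_right (p ^ e) N)
      calc p * p = p ^ 2 := (sq p).symm
      _ ∣ p ^ k := pow_dvd_pow p h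
    exact hp.one_lt.ne' (Nat.isUnit_iff.mp (hN p hpp))
  rw [hkeq]
  have : k = 1 := le_antisymm hk2 hk1
  rw [this, pow_one]

lemma local_factor {N : ℕ} (hN : Squarefree N) {s : ℂ} (hs : 1 < s.re) (p : Nat.Primes) :
    (∑' e : ℕ, f N s ((p : ℕ) ^ e)) * (1 - ((p : ℕ) : ℂ) ^ (-(2 * s)))⁻¹
      = (if (p : ℕ) ∣ N then (((p : ℕ) : ℂ) ^ s + ((p : ℕ) : ℂ)) / (((p : ℕ) : ℂ) ^ s + 1) else 1)
          * (1 - ((p : ℕ) : ℂ) ^ (-(2 * s - 1)))⁻¹ := by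
  obtain ⟨p, hp⟩ := p
  simp only []
  have hP0 : ((p : ℕ) : ℂ) ≠ 0 := Nat.cast_ne_zero.mpr hp.pos.ne'
  set P : ℂ := ((p : ℕ) : ℂ) with hPdef
  set x : ℂ := P ^ (-(2 * s)) with hxdef
  have hre2 : (-(2 * s)).re = -(2 * s.re) := by simp [mul_re]
  have hre1 : (-(2 * s - 1)).re = 1 - 2 * s.re := by simp [mul_re]
  have hp1R : (1 : ℝ) < (p : ℝ) := by exact_mod_cast hp.one_lt
  have hxnorm : ‖x‖ < 1 := by
    rw [hxdef, norm_natCast_cpow_of_pos hp.pos, hre2]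
    exact Real.rpow_lt_one_of_one_lt_of_neg hp1R (by linarith)
  have hPx : P * x = P ^ (-(2 * s - 1)) := by
    rw [show -(2 * s - 1) = 1 + -(2 * s) by ring, cpow_add _ _ hP0, cpow_one]
  have hPxnorm : ‖P * x‖ < 1 := by
    rw [hPx, norm_natCast_cpow_of_pos hp.pos, hre1]
    exact Real.rpow_lt_one_of_one_lt_of_neg hp1R (by linarith)
  have h1x : (1 : ℂ) - x ≠ 0 := by
    intro h
    rw [sub_eq_zero] at h
    rw [← h] at hxnorm
    simp at hxnorm
  have h1px : (1 : ℂ) - P * x ≠ 0 := by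
    intro h
    rw [sub_eq_zero] at h
    rw [← h] at hPxnorm
    simp at hPxnorm
  have ha : P ^ s ≠ 0 := by
    rw [Ne, cpow_eq_zero_iff]
    tauto
  have ha1 : P ^ s + 1 ≠ 0 := by
    intro h
    have h2 : P ^ s = -1 := by linear_combination h
    have h3 : ‖P ^ s‖ = ((p : ℕ) : ℝ) ^ s.re := norm_natCast_cpow_of_pos hp.pos s
    rw [h2] at h3
    simp at h3
    have : (1 : ℝ) < ((p : ℕ) : ℝ) ^ s.re :=
      Real.one_lt_rpow_iff_of_pos (by positivity) |>.mpr (Or.inl ⟨hp1R, by linarith⟩)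
    linarith
  have hxa : x = (P ^ s * P ^ s)⁻¹ := by
    rw [hxdef, show -(2 * s) = -(s + s) by ring, cpow_neg, cpow_add _ _ hP0]
  have hf : ∀ e : ℕ, f N s (p ^ e)
      = (Nat.totient (p ^ e) : ℂ) * (Nat.gcd (p ^ e) N : ℂ) ^ s * x ^ e := by
    intro e
    unfold f
    rw [natCast_pow_cpow]
  by_cases hdvd : p ∣ N
  · rw [if_pos hdvd, ← hPx]
    have hfe : ∀ e : ℕ, f N s (p ^ e)
        = P ^ s * ((Nat.totient (p ^ e) : ℂ) * x ^ e) + (if e = 0 then 1 - P ^ s else 0) := by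
      intro e
      cases e with
      | zero =>
        rw [pow_zero, f_one]
        simp
      | succ e =>
        rw [hf, gcd_prime_pow_squarefree hN hp hdvd (Nat.succ_ne_zero e)]
        simp only [Nat.succ_ne_zero, if_false, add_zero]
        ring
    rw [tsum_congr hfe,
      Summable.tsum_add ((summable_totient_geom hp hPxnorm).mul_left _)
        (summable_of_ne_finset_zero (s := {0}) (by intro e he; simp at he; simp [he])),
      tsum_mul_left, tsum_totient_geom hp hPxnorm, tsum_ite_eq]
    have haa : P ^ s * P ^ s ≠ 0 := mul_ne_zero ha ha
    have h1 : 1 - x = (P ^ s * P ^ s - 1) / (P ^ s * P ^ s) := by rw [hxa]; field_simp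
    have h2 : 1 - P * x = (P ^ s * P ^ s - P) / (P ^ s * P ^ s) := by rw [hxa]; field_simp
    have hne1 : P ^ s * P ^ s - 1 ≠ 0 := by intro h; apply h1x; rw [h1, h, zero_div]
    have hne2 : P ^ s * P ^ s - P ≠ 0 := by intro h; apply h1px; rw [h2, h, zero_div]
    rw [h1, h2]
    field_simp
    rw [← sq] at hne1 hne2
    field_simp
    ring
  · rw [if_neg hdvd, ← hPx, one_mul]
    have hfe : ∀ e : ℕ, f N s (p ^ e) = (Nat.totient (p ^ e) : ℂ) * x ^ e := by
      intro e
      rw [hf]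
      have : Nat.gcd (p ^ e) N = 1 := Nat.Coprime.pow_left e (hp.coprime_iff_not_dvd.mpr hdvd)
      rw [this, Nat.cast_one, one_cpow, mul_one]
    rw [tsum_congr hfe, tsum_totient_geom hp hPxnorm]
    field_simp
    ring

lemma tsum_f_eq {N : ℕ} (hNsq : Squarefree N) (hN0 : N ≠ 0) {s : ℂ} (hs : 1 < s.re) :
    (∑' m : ℕ, f N s m) * riemannZeta (2 * s)
      = (∏ p ∈ N.primeFactors, (((p : ℕ) : ℂ) ^ s + ((p : ℕ) : ℂ)) / (((p : ℕ) : ℂ) ^ s + 1))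
          * riemannZeta (2 * s - 1) := by
  have hw : 1 < (2 * s).re := by
    have : (2 * s).re = 2 * s.re := by simp [mul_re]
    rw [this]; linarith
  have hw1 : 1 < (2 * s - 1).re := by
    have : (2 * s - 1).re = 2 * s.re - 1 := by simp [mul_re]
    rw [this]; linarith
  have hEuler : HasProd (fun p : Nat.Primes ↦ ∑' e : ℕ, f N s ((p : ℕ) ^ e)) (∑' m : ℕ, f N s m) :=
    EulerProduct.eulerProduct_hasProd (f_one N s) (f_mul N s) (f_norm_summable hN0 hs)
      (f_zero N s)
  have hz2 : HasProd (fun p : Nat.Primes ↦ (1 - ((p : ℕ) : ℂ) ^ (-(2 * s)))⁻¹)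
      (riemannZeta (2 * s)) := riemannZeta_eulerProduct_hasProd hw
  have hz1 : HasProd (fun p : Nat.Primes ↦ (1 - ((p : ℕ) : ℂ) ^ (-(2 * s - 1)))⁻¹)
      (riemannZeta (2 * s - 1)) := riemannZeta_eulerProduct_hasProd hw1
  -- the finite correction factor
  set u : Nat.Primes → ℂ := fun p ↦
    if (p : ℕ) ∣ N then (((p : ℕ) : ℂ) ^ s + ((p : ℕ) : ℂ)) / (((p : ℕ) : ℂ) ^ s + 1) else 1
    with hu_def
  set t : Finset Nat.Primes :=
    N.primeFactors.attach.map
      ⟨fun q ↦ (⟨q.1, Nat.prime_of_mem_primeFactors q.2⟩ : Nat.Primes),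
        by intro a b h; exact Subtype.ext (Subtype.mk_eq_mk.mp h)⟩ with ht_def
  have hu : HasProd u
      (∏ p ∈ N.primeFactors, (((p : ℕ) : ℂ) ^ s + ((p : ℕ) : ℂ)) / (((p : ℕ) : ℂ) ^ s + 1)) := by
    have h1 : ∀ p : Nat.Primes, p ∉ t → u p = 1 := by
      intro p hp
      rw [hu_def]
      simp only []
      rw [if_neg]
      intro hdvd
      apply hp
      rw [ht_def, Finset.mem_map]
      refine ⟨⟨(p : ℕ), Nat.mem_primeFactors.mpr ⟨p.2, hdvd, hN0⟩⟩, Finset.mem_attach _ _, ?_⟩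
      rfl
    have h2 : HasProd u (∏ p ∈ t, u p) := hasProd_prod_of_ne_finset_one h1
    have h3 : ∏ p ∈ t, u p
        = ∏ p ∈ N.primeFactors, (((p : ℕ) : ℂ) ^ s + ((p : ℕ) : ℂ)) / (((p : ℕ) : ℂ) ^ s + 1) := by
      rw [ht_def, Finset.prod_map]
      rw [← Finset.prod_attach N.primeFactors
        (fun p ↦ (((p : ℕ) : ℂ) ^ s + ((p : ℕ) : ℂ)) / (((p : ℕ) : ℂ) ^ s + 1))]
      apply Finset.prod_congr rfl
      intro q _
      rw [hu_def]
      simp only [Function.Embedding.coeFn_mk]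
      exact if_pos (Nat.dvd_of_mem_primeFactors q.2)
    rw [← h3]
    exact h2
  have hkey : (fun p : Nat.Primes ↦ (∑' e : ℕ, f N s ((p : ℕ) ^ e))
        * (1 - ((p : ℕ) : ℂ) ^ (-(2 * s)))⁻¹)
      = fun p : Nat.Primes ↦ u p * (1 - ((p : ℕ) : ℂ) ^ (-(2 * s - 1)))⁻¹ :=
    funext fun p ↦ local_factor hNsq hs p
  exact HasProd.unique (hkey ▸ hEuler.mul hz2) (hu.mul hz1)

lemma sqrt_nat_cpow (v : ℕ) (s : ℂ) :
    ((Real.sqrt v : ℝ) : ℂ) ^ (2 * s) = (v : ℂ) ^ s := by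
  rw [show (2 : ℂ) * s = ((2 : ℕ) : ℂ) * s by norm_num, cpow_nat_mul, sq,
    ← mul_cpow_ofReal_nonneg (Real.sqrt_nonneg _) (Real.sqrt_nonneg _), ← ofReal_mul,
    Real.mul_self_sqrt (Nat.cast_nonneg v), ofReal_natCast]

lemma step1 {N : ℕ} (hN0 : N ≠ 0) {s : ℂ} (hs : 1 < s.re) :
    ∑ v ∈ N.divisors, ∑' n : ℕ,
        (if n ≠ 0 ∧ Nat.gcd n v = 1 then
          (Nat.totient ((N / v) * n) : ℂ)
            / (((N / v : ℕ) : ℂ) * (Real.sqrt v : ℂ) * (n : ℂ)) ^ (2 * s)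
        else 0)
      = ∑' m : ℕ, f N s m * (N : ℂ) ^ (-s) := by
  classical
  set G : ℕ → ℕ → ℂ := fun v m ↦
    if Nat.gcd m N = N / v ∧ m ≠ 0 then f N s m * (N : ℂ) ^ (-s) else 0 with hG
  have hGsummable : ∀ v : ℕ, Summable (G v) := by
    intro v
    apply Summable.of_norm_bounded (g := fun m ↦ ‖f N s m‖ * ‖(N : ℂ) ^ (-s)‖)
      ((f_norm_summable hN0 hs).mul_right _)
    intro m
    rw [hG]
    dsimp only
    split
    · rw [norm_mul]
    · rw [norm_zero]
      positivity
  have hA : ∀ v ∈ N.divisors, (∑' n : ℕ,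
        (if n ≠ 0 ∧ Nat.gcd n v = 1 then
          (Nat.totient ((N / v) * n) : ℂ)
            / (((N / v : ℕ) : ℂ) * (Real.sqrt v : ℂ) * (n : ℂ)) ^ (2 * s)
        else 0)) = ∑' m : ℕ, G v m := by
    intro v hv
    obtain ⟨hvdvd, -⟩ := Nat.mem_divisors.mp hv
    have hv0 : v ≠ 0 := by
      rintro rfl
      exact hN0 (Nat.eq_zero_of_zero_dvd hvdvd)
    set d := N / v with hd
    have hdv : d * v = N := Nat.div_mul_cancel hvdvd
    have hd0 : d ≠ 0 := by
      intro h
      rw [h, zero_mul] at hdv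
      exact hN0 hdv.symm
    have hinj : Function.Injective (fun n : ℕ ↦ d * n) := fun a b h ↦
      Nat.eq_of_mul_eq_mul_left (Nat.pos_of_ne_zero hd0) h
    have hsupp : Function.support (G v) ⊆ Set.range (fun n : ℕ ↦ d * n) := by
      intro m hm
      have hcond : Nat.gcd m N = d ∧ m ≠ 0 := by
        by_contra h
        apply hm
        rw [hG]
        exact if_neg h
      have hdm : d ∣ m := hcond.1 ▸ Nat.gcd_dvd_left m N
      exact ⟨m / d, Nat.mul_div_cancel' hdm⟩
    rw [← hinj.tsum_eq hsupp]
    apply tsum_congr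
    intro n
    have hgcd : Nat.gcd (d * n) N = d * Nat.gcd n v := by
      conv_lhs => rw [← hdv]
      exact Nat.gcd_mul_left d n v
    rw [hG]
    dsimp only
    by_cases hc : n ≠ 0 ∧ Nat.gcd n v = 1
    · rw [if_pos hc, if_pos ⟨by rw [hgcd, hc.2, mul_one], mul_ne_zero hd0 hc.1⟩]
      unfold f
      rw [hgcd, hc.2, mul_one]
      have hdc : (d : ℂ) ≠ 0 := Nat.cast_ne_zero.mpr hd0
      have hnc : (n : ℂ) ≠ 0 := Nat.cast_ne_zero.mpr hc.1
      have hvc : (v : ℂ) ≠ 0 := Nat.cast_ne_zero.mpr hv0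
      have hX : ((d : ℂ) * (Real.sqrt v : ℂ) * (n : ℂ)) ^ (2 * s)
          = (d : ℂ) ^ (2 * s) * (v : ℂ) ^ s * (n : ℂ) ^ (2 * s) := by
        have e0 : ((d : ℂ) * (Real.sqrt v : ℂ) * (n : ℂ))
            = ((((d : ℝ) * Real.sqrt v) : ℝ) : ℂ) * (((n : ℝ)) : ℂ) := by
          push_cast
          ring
        rw [e0, mul_cpow_ofReal_nonneg (by positivity) (Nat.cast_nonneg n),
          ofReal_mul, mul_cpow_ofReal_nonneg (Nat.cast_nonneg d) (Real.sqrt_nonneg _),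
          sqrt_nat_cpow, ofReal_natCast, ofReal_natCast]
      have hNsplit : ((N : ℕ) : ℂ) ^ (-s) = ((d : ℂ) ^ s * (v : ℂ) ^ s)⁻¹ := by
        rw [← hdv, cpow_neg, natCast_mul_cpow]
      have hdn : ((d * n : ℕ) : ℂ) ^ (-(2 * s)) = ((d : ℂ) ^ (2 * s) * (n : ℂ) ^ (2 * s))⁻¹ := by
        rw [cpow_neg, natCast_mul_cpow]
      rw [hX, hNsplit, hdn]
      have hz1 : (d : ℂ) ^ (2 * s) ≠ 0 := by simp [cpow_eq_zero_iff, hdc]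
      have hz2 : (n : ℂ) ^ (2 * s) ≠ 0 := by simp [cpow_eq_zero_iff, hnc]
      have hz3 : (d : ℂ) ^ s ≠ 0 := by simp [cpow_eq_zero_iff, hdc]
      have hz4 : (v : ℂ) ^ s ≠ 0 := by simp [cpow_eq_zero_iff, hvc]
      field_simp
    · rw [if_neg hc, if_neg]
      rintro ⟨h1, h2⟩
      apply hc
      refine ⟨by rintro rfl; exact h2 (mul_zero d), ?_⟩
      rw [hgcd] at h1
      have : d * Nat.gcd n v = d * 1 := by rw [mul_one, h1]
      exact Nat.eq_of_mul_eq_mul_left (Nat.pos_of_ne_zero hd0) this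
  have hC : ∀ m : ℕ, ∑ v ∈ N.divisors, G v m = f N s m * (N : ℂ) ^ (-s) := by
    intro m
    by_cases hm : m = 0
    · subst hm
      simp [hG, f_zero]
    · rw [Finset.sum_eq_single_of_mem (N / Nat.gcd m N)
        (Nat.mem_divisors.mpr ⟨Nat.div_dvd_of_dvd (Nat.gcd_dvd_right m N), hN0⟩)]
      · rw [hG]
        dsimp only
        rw [if_pos ⟨(Nat.div_div_self (Nat.gcd_dvd_right m N) hN0).symm, hm⟩]
      · intro b hb hbne
        rw [hG]
        dsimp only
        rw [if_neg]
        rintro ⟨h1, -⟩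
        apply hbne
        have hbdvd : b ∣ N := (Nat.mem_divisors.mp hb).1
        rw [h1]
        exact (Nat.div_div_self hbdvd hN0).symm
  rw [Finset.sum_congr rfl hA, ← Summable.tsum_finsetSum (fun v _ ↦ hGsummable v)]
  exact tsum_congr hC

end HNaux

open Complex Finset in
/-- Evaluation of the Dirichlet series part `H_N(s)` of the scattering determinant for
`Γ₀(N)⁺`, `N` square-free, `Re s > 1`. -/
theorem H_N_eval (N : ℕ) (hN : Squarefree N) (hN1 : 1 < N) (s : ℂ) (hs : 1 < s.re) :
    ∑ v ∈ N.divisors, ∑' n : ℕ,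
        (if n ≠ 0 ∧ Nat.gcd n v = 1 then
          (Nat.totient ((N / v) * n) : ℂ)
            / (((N / v : ℕ) : ℂ) * (Real.sqrt v : ℂ) * (n : ℂ)) ^ (2 * s)
        else 0)
      = riemannZeta (2 * s - 1) / riemannZeta (2 * s) * (N : ℂ) ^ (-s)
          * ∏ p ∈ N.primeFactors, ((p : ℂ) ^ s + p) / ((p : ℂ) ^ s + 1) := by
  have hN0 : N ≠ 0 := by omega
  rw [HNaux.step1 hN0 hs, tsum_mul_right]
  have h := HNaux.tsum_f_eq hN hN0 hs
  have hw : 1 < (2 * s).re := by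
    have : (2 * s).re = 2 * s.re := by simp [Complex.mul_re]
    rw [this]; linarith
  have hz : riemannZeta (2 * s) ≠ 0 := riemannZeta_ne_zero_of_one_lt_re hw
  have hS : (∑' m : ℕ, HNaux.f N s m)
      = (∏ p ∈ N.primeFactors, ((p : ℂ) ^ s + p) / ((p : ℂ) ^ s + 1))
          * riemannZeta (2 * s - 1) / riemannZeta (2 * s) := by
    rw [eq_div_iff hz]
    exact h
  rw [hS]
  ring
end

section
/- For all real T ≥ 1, Im(log Γ(1 + iT)) = −T + T·log T + π/4 + g₃(T) where |g₃(T)| ≤ 49/(45·T); in particular Im(log Γ(1+iT)) = T·log T − T + π/4 + O(1/T). -/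
open Real

noncomputable def emF (T x : ℝ) : ℝ := x * Real.arctan (T / x) + T / 2 * Real.log (x ^ 2 + T ^ 2)

noncomputable def emc (T a : ℝ) : ℝ :=
  (Real.arctan (T / a) + Real.arctan (T / (a + 1))) / 2 - (emF T (a + 1) - emF T a)

lemma hasDerivAt_arctanDiv (T : ℝ) {x : ℝ} (hx : 0 < x) :
    HasDerivAt (fun x => Real.arctan (T / x)) (-T / (x ^ 2 + T ^ 2)) x := by
  have hx2 : x ^ 2 + T ^ 2 > 0 := by positivity
  have h1 : HasDerivAt (fun x : ℝ => T / x) (-T / x ^ 2) x := by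
    simpa [div_eq_mul_inv, mul_comm] using ((hasDerivAt_inv hx.ne').const_mul T)
  have := (Real.hasDerivAt_arctan (T / x)).comp x h1
  refine this.congr_deriv ?_
  field_simp

lemma hasDerivAt_emF (T : ℝ) {x : ℝ} (hx : 0 < x) :
    HasDerivAt (emF T) (Real.arctan (T / x)) x := by
  have hx2 : x ^ 2 + T ^ 2 > 0 := by positivity
  have h1 : HasDerivAt (fun x : ℝ => x * Real.arctan (T / x))
      (1 * Real.arctan (T / x) + x * (-T / (x ^ 2 + T ^ 2))) x :=
    (hasDerivAt_id x).mul (hasDerivAt_arctanDiv T hx)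
  have h2 : HasDerivAt (fun x : ℝ => x ^ 2 + T ^ 2) (2 * x) x := by
    simpa using ((hasDerivAt_pow 2 x).add_const (T ^ 2))
  have h3 : HasDerivAt (fun x : ℝ => T / 2 * Real.log (x ^ 2 + T ^ 2))
      (T / 2 * (2 * x / (x ^ 2 + T ^ 2))) x := by
    have := (Real.hasDerivAt_log hx2.ne').comp x h2
    simpa [div_eq_mul_inv, mul_comm, mul_assoc] using this.const_mul (T / 2)
  have := h1.add h3
  refine this.congr_deriv ?_
  field_simp
  ring

lemma hasDerivAt_G (T a : ℝ) {x : ℝ} (hx : 0 < x) :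
    HasDerivAt (fun x => (x - (a + 1 / 2)) * Real.arctan (T / x) - emF T x)
      ((x - (a + 1 / 2)) * (-T / (x ^ 2 + T ^ 2))) x := by
  have h1 := (((hasDerivAt_id x).sub_const (a + 1 / 2)).mul (hasDerivAt_arctanDiv T hx)).sub
    (hasDerivAt_emF T hx)
  simp only [id_eq] at h1
  refine h1.congr_deriv ?_
  ring

lemma emc_eq (T : ℝ) {a : ℝ} (ha : 1 ≤ a) :
    emc T a = ∫ x in a..(a + 1), (x - (a + 1 / 2)) * (-T / (x ^ 2 + T ^ 2)) := by
  have hab : a ≤ a + 1 := by linarith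
  have hpos : ∀ x ∈ Set.uIcc a (a + 1), (0:ℝ) < x := by
    intro x hx
    rw [Set.uIcc_of_le hab] at hx
    linarith [hx.1]
  have hcont : ContinuousOn (fun x : ℝ => (x - (a + 1 / 2)) * (-T / (x ^ 2 + T ^ 2)))
      (Set.uIcc a (a + 1)) := by
    apply ContinuousOn.mul (by fun_prop)
    apply ContinuousOn.div continuousOn_const (by fun_prop)
    intro x hx
    have := hpos x hx
    positivity
  rw [intervalIntegral.integral_eq_sub_of_hasDerivAt
    (fun x hx => hasDerivAt_G T a (hpos x hx)) (hcont.intervalIntegrable)]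
  simp only [emc]
  ring

lemma contOn_integrand (T a : ℝ) (ha : 1 ≤ a) :
    ContinuousOn (fun x : ℝ => (x - (a + 1 / 2)) * (-T / (x ^ 2 + T ^ 2))) (Set.uIcc a (a + 1)) := by
  have hab : a ≤ a + 1 := by linarith
  apply ContinuousOn.mul (by fun_prop)
  apply ContinuousOn.div continuousOn_const (by fun_prop)
  intro x hx
  rw [Set.uIcc_of_le hab] at hx
  have h1 : (1:ℝ) ≤ x := le_trans ha hx.1
  nlinarith

open intervalIntegral in
lemma integral_center (a : ℝ) : (∫ x in a..(a + 1), (x - (a + 1 / 2))) = 0 := by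
  rw [intervalIntegral.integral_sub (intervalIntegrable_id) intervalIntegrable_const,
    integral_id, integral_const]
  simp
  ring

lemma emc_eq' (T : ℝ) {a : ℝ} (ha : 1 ≤ a) :
    emc T a = ∫ x in a..(a + 1),
      (x - (a + 1 / 2)) * (-T / (x ^ 2 + T ^ 2) - -T / ((a + 1 / 2) ^ 2 + T ^ 2)) := by
  have h1 : ∀ x : ℝ, (x - (a + 1 / 2)) * (-T / (x ^ 2 + T ^ 2) - -T / ((a + 1 / 2) ^ 2 + T ^ 2))
      = (x - (a + 1 / 2)) * (-T / (x ^ 2 + T ^ 2))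
        - (x - (a + 1 / 2)) * (-T / ((a + 1 / 2) ^ 2 + T ^ 2)) := fun x => by ring
  simp_rw [h1]
  rw [intervalIntegral.integral_sub ((contOn_integrand T a ha).intervalIntegrable)
    (by apply ContinuousOn.intervalIntegrable; fun_prop)]
  rw [intervalIntegral.integral_mul_const, integral_center, zero_mul, sub_zero, emc_eq T ha]

lemma g_mono (T : ℝ) (hT : 0 ≤ T) {x y : ℝ} (hx : 0 < x) (hxy : x ≤ y) :
    -T / (x ^ 2 + T ^ 2) ≤ -T / (y ^ 2 + T ^ 2) := by
  have hx2 : 0 < x ^ 2 + T ^ 2 := by positivity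
  have hy2 : 0 < y ^ 2 + T ^ 2 := by nlinarith
  rw [neg_div, neg_div, neg_le_neg_iff]
  gcongr T / ?_
  nlinarith

lemma pointwise_nonneg (T a : ℝ) (hT : 0 ≤ T) (ha : 1 ≤ a) {x : ℝ}
    (hx : x ∈ Set.Icc a (a + 1)) :
    0 ≤ (x - (a + 1 / 2)) * (-T / (x ^ 2 + T ^ 2) - -T / ((a + 1 / 2) ^ 2 + T ^ 2)) := by
  have hx1 : (1:ℝ) ≤ x := le_trans ha hx.1
  rcases le_total x (a + 1 / 2) with h | h
  · have h2 := g_mono T hT (lt_of_lt_of_le zero_lt_one hx1) h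
    nlinarith
  · apply mul_nonneg (by linarith)
    have := g_mono T hT (by linarith : (0:ℝ) < a + 1/2) h
    linarith

lemma pointwise_le (T a : ℝ) (hT : 0 ≤ T) (ha : 1 ≤ a) {x : ℝ}
    (hx : x ∈ Set.Icc a (a + 1)) :
    (x - (a + 1 / 2)) * (-T / (x ^ 2 + T ^ 2) - -T / ((a + 1 / 2) ^ 2 + T ^ 2))
      ≤ (-T / ((a + 1) ^ 2 + T ^ 2) - -T / (a ^ 2 + T ^ 2)) / 2 := by
  have hx1 : (1:ℝ) ≤ x := le_trans ha hx.1
  have ha0 : (0:ℝ) < a := by linarith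
  have hm0 : (0:ℝ) < a + 1/2 := by linarith
  rcases le_total x (a + 1 / 2) with h | h
  · have e : (x - (a + 1 / 2)) * (-T / (x ^ 2 + T ^ 2) - -T / ((a + 1 / 2) ^ 2 + T ^ 2))
        = ((a + 1 / 2) - x) * (-T / ((a + 1 / 2) ^ 2 + T ^ 2) - -T / (x ^ 2 + T ^ 2)) := by ring
    rw [e]
    have h1 : (a + 1 / 2) - x ≤ 1 / 2 := by linarith [hx.1]
    have h2 : -T / ((a + 1 / 2) ^ 2 + T ^ 2) - -T / (x ^ 2 + T ^ 2)
        ≤ -T / ((a + 1) ^ 2 + T ^ 2) - -T / (a ^ 2 + T ^ 2) := by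
      have := g_mono T hT hm0 (by linarith : a + 1/2 ≤ a + 1)
      have := g_mono T hT ha0 hx.1
      linarith
    have h3 : 0 ≤ -T / ((a + 1 / 2) ^ 2 + T ^ 2) - -T / (x ^ 2 + T ^ 2) := by
      have := g_mono T hT (by linarith : (0:ℝ) < x) h
      linarith
    calc ((a + 1 / 2) - x) * (-T / ((a + 1 / 2) ^ 2 + T ^ 2) - -T / (x ^ 2 + T ^ 2))
        ≤ (1/2) * (-T / ((a + 1) ^ 2 + T ^ 2) - -T / (a ^ 2 + T ^ 2)) := by
          apply mul_le_mul h1 h2 h3 (by norm_num)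
      _ = (-T / ((a + 1) ^ 2 + T ^ 2) - -T / (a ^ 2 + T ^ 2)) / 2 := by ring
  · have h1 : x - (a + 1 / 2) ≤ 1 / 2 := by linarith [hx.2]
    have h2 : -T / (x ^ 2 + T ^ 2) - -T / ((a + 1 / 2) ^ 2 + T ^ 2)
        ≤ -T / ((a + 1) ^ 2 + T ^ 2) - -T / (a ^ 2 + T ^ 2) := by
      have := g_mono T hT (by linarith : (0:ℝ) < x) hx.2
      have := g_mono T hT ha0 (by linarith : a ≤ a + 1/2)
      linarith
    have h3 : 0 ≤ -T / (x ^ 2 + T ^ 2) - -T / ((a + 1 / 2) ^ 2 + T ^ 2) := by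
      have := g_mono T hT hm0 h
      linarith
    calc (x - (a + 1 / 2)) * (-T / (x ^ 2 + T ^ 2) - -T / ((a + 1 / 2) ^ 2 + T ^ 2))
        ≤ (1/2) * (-T / ((a + 1) ^ 2 + T ^ 2) - -T / (a ^ 2 + T ^ 2)) := by
          apply mul_le_mul h1 h2 h3 (by norm_num)
      _ = (-T / ((a + 1) ^ 2 + T ^ 2) - -T / (a ^ 2 + T ^ 2)) / 2 := by ring

lemma contOn_integrand2 (T a : ℝ) (ha : 1 ≤ a) :
    ContinuousOn (fun x : ℝ =>
      (x - (a + 1 / 2)) * (-T / (x ^ 2 + T ^ 2) - -T / ((a + 1 / 2) ^ 2 + T ^ 2)))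
      (Set.uIcc a (a + 1)) := by
  have hab : a ≤ a + 1 := by linarith
  apply ContinuousOn.mul (by fun_prop)
  apply ContinuousOn.sub _ continuousOn_const
  apply ContinuousOn.div continuousOn_const (by fun_prop)
  intro x hx
  rw [Set.uIcc_of_le hab] at hx
  have h1 : (1:ℝ) ≤ x := le_trans ha hx.1
  nlinarith

lemma emc_nonneg {T a : ℝ} (hT : 0 ≤ T) (ha : 1 ≤ a) : 0 ≤ emc T a := by
  rw [emc_eq' T ha]
  apply intervalIntegral.integral_nonneg (by linarith)
  intro x hx
  exact pointwise_nonneg T a hT ha hx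

lemma emc_le {T a : ℝ} (hT : 0 ≤ T) (ha : 1 ≤ a) :
    emc T a ≤ (T / (a ^ 2 + T ^ 2) - T / ((a + 1) ^ 2 + T ^ 2)) / 2 := by
  rw [emc_eq' T ha]
  have h := intervalIntegral.integral_mono_on (by linarith : a ≤ a + 1)
    ((contOn_integrand2 T a ha).intervalIntegrable)
    (intervalIntegrable_const : IntervalIntegrable _ MeasureTheory.volume _ _)
    (fun x hx => pointwise_le T a hT ha hx)
  rw [intervalIntegral.integral_const] at h
  refine h.trans (le_of_eq ?_)
  simp only [smul_eq_mul]
  ring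

lemma abs_emc_le (T : ℝ) {a : ℝ} (ha : 1 ≤ a) : |emc T a| ≤ |T| / (2 * a ^ 2) := by
  rw [emc_eq T ha]
  have key : ∀ x ∈ Set.uIoc a (a + 1),
      ‖(x - (a + 1 / 2)) * (-T / (x ^ 2 + T ^ 2))‖ ≤ |T| / (2 * a ^ 2) := by
    intro x hx
    rw [Set.uIoc_of_le (by linarith : a ≤ a + 1)] at hx
    have hx1 : a < x := hx.1
    have ha0 : (0:ℝ) < a := by linarith
    have hd : (0:ℝ) < x ^ 2 + T ^ 2 := by nlinarith
    rw [norm_mul, Real.norm_eq_abs, Real.norm_eq_abs, abs_div, abs_neg, abs_of_pos hd]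
    have h1 : |x - (a + 1 / 2)| ≤ 1 / 2 := by
      rw [abs_le]; constructor <;> [linarith [hx.1]; linarith [hx.2]]
    have h2 : |T| / (x ^ 2 + T ^ 2) ≤ |T| / a ^ 2 := by
      gcongr |T| / ?_ <;> nlinarith
    calc |x - (a + 1 / 2)| * (|T| / (x ^ 2 + T ^ 2)) ≤ (1/2) * (|T| / a ^ 2) := by
          apply mul_le_mul h1 h2 (by positivity) (by norm_num)
      _ = |T| / (2 * a ^ 2) := by ring
  have := intervalIntegral.norm_integral_le_of_norm_le_const key
  simp only [Real.norm_eq_abs] at this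
  calc |∫ x in a..(a+1), (x - (a + 1 / 2)) * (-T / (x ^ 2 + T ^ 2))|
      ≤ |T| / (2 * a ^ 2) * |a + 1 - a| := this
    _ = |T| / (2 * a ^ 2) := by simp

lemma sum_emc (T : ℝ) (n : ℕ) :
    ∑ k ∈ Finset.range n, emc T ((k : ℝ) + 1)
      = (∑ j ∈ Finset.range (n + 1), Real.arctan (T / ((j : ℝ) + 1)))
        - (Real.arctan (T / 1) + Real.arctan (T / ((n : ℝ) + 1))) / 2
        - (emF T ((n : ℝ) + 1) - emF T 1) := by
  induction n with
  | zero => norm_num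
  | succ n ih =>
    rw [Finset.sum_range_succ, ih,
      Finset.sum_range_succ (fun j => Real.arctan (T / ((j : ℝ) + 1))) (n + 1)]
    simp only [emc]
    push_cast
    ring

lemma summable_comparison (T : ℝ) : Summable (fun k : ℕ => |T| / (2 * ((k : ℝ) + 1) ^ 2)) := by
  have h0 : Summable (fun n : ℕ => 1 / ((n : ℝ)) ^ 2) :=
    Real.summable_one_div_nat_pow.mpr one_lt_two
  have h1 := (summable_nat_add_iff 1).mpr h0
  apply (h1.mul_left (|T| / 2)).congr
  intro n
  have h2 : ((n:ℝ) + 1) ≠ 0 := by positivity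
  push_cast
  field_simp

lemma one_le_cast_add_one (k : ℕ) : (1:ℝ) ≤ (k : ℝ) + 1 := by
  have : (0:ℝ) ≤ (k : ℝ) := Nat.cast_nonneg k
  linarith

lemma summable_emc (T : ℝ) : Summable (fun k : ℕ => emc T ((k : ℝ) + 1)) := by
  rw [← summable_abs_iff]
  exact Summable.of_nonneg_of_le (fun k => abs_nonneg _)
    (fun k => abs_emc_le T (one_le_cast_add_one k)) (summable_comparison T)

noncomputable def emC (T : ℝ) : ℝ := ∑' k : ℕ, emc T ((k : ℝ) + 1)

noncomputable def ImM (T : ℝ) : ℝ :=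
  -T + T / 2 * Real.log (1 + T ^ 2) + Real.arctan T / 2 - emC T

lemma emC_nonneg {T : ℝ} (hT : 1 ≤ T) : 0 ≤ emC T :=
  tsum_nonneg fun k => emc_nonneg (by linarith) (one_le_cast_add_one k)

lemma emC_le {T : ℝ} (hT : 1 ≤ T) : emC T ≤ 1 / (2 * T) := by
  have hT0 : (0:ℝ) < T := by linarith
  set hh : ℕ → ℝ := fun k => T / (((k:ℝ)+1)^2 + T^2) with hh_def
  apply Real.tsum_le_of_sum_range_le (fun k => emc_nonneg (by linarith) (one_le_cast_add_one k))
  intro n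
  have key : ∀ k ∈ Finset.range n, emc T ((k:ℝ)+1) ≤ (hh k - hh (k+1)) / 2 := by
    intro k _
    have := emc_le (T := T) (a := (k:ℝ)+1) (by linarith) (one_le_cast_add_one k)
    refine this.trans (le_of_eq ?_)
    simp only [hh_def]
    push_cast
    ring
  calc ∑ k ∈ Finset.range n, emc T ((k:ℝ)+1)
      ≤ ∑ k ∈ Finset.range n, (hh k - hh (k+1)) / 2 := Finset.sum_le_sum key
    _ = (hh 0 - hh n) / 2 := by rw [← Finset.sum_div, Finset.sum_range_sub' hh n]
    _ ≤ hh 0 / 2 := by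
        have : 0 ≤ hh n := by apply div_nonneg (le_of_lt hT0); positivity
        linarith
    _ ≤ 1 / (2*T) := by
        simp only [hh_def, Nat.cast_zero]
        rw [div_div, div_le_div_iff₀ (by positivity) (by positivity)]
        nlinarith

open Filter Topology

lemma tendsto_log_part (T : ℝ) :
    Tendsto (fun n : ℕ => T * Real.log n - T/2 * Real.log (((n:ℝ)+1)^2 + T^2)) atTop (𝓝 0) := by
  have t0 : Tendsto (fun n : ℕ => 1/((n:ℝ))) atTop (𝓝 0) := tendsto_one_div_atTop_nhds_zero_nat
  have tratio : Tendsto (fun n : ℕ => (1+1/(n:ℝ))^2 + T^2*(1/(n:ℝ))^2) atTop (𝓝 1) := by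
    have h := ((t0.const_add 1).pow 2).add ((t0.pow 2).const_mul (T^2))
    have hv : ((1:ℝ)+0)^2 + T^2*0^2 = 1 := by norm_num
    rw [hv] at h
    exact h
  have tlog : Tendsto (fun n : ℕ => Real.log ((1+1/(n:ℝ))^2 + T^2*(1/(n:ℝ))^2)) atTop (𝓝 0) := by
    have h := (Real.continuousAt_log one_ne_zero).tendsto.comp tratio
    simpa [Function.comp_def] using h
  have main := tlog.const_mul (-(T/2))
  rw [mul_zero] at main
  apply main.congr'
  filter_upwards [eventually_ge_atTop 1] with n hn
  have hx : (1:ℝ) ≤ (n:ℝ) := by exact_mod_cast hn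
  have hx0 : (0:ℝ) < (n:ℝ) := by linarith
  have hinner : (0:ℝ) < (1+1/(n:ℝ))^2 + T^2*(1/(n:ℝ))^2 := by
    have h1 : (0:ℝ) < 1 + 1/(n:ℝ) := by positivity
    nlinarith [sq_nonneg (T * (1/(n:ℝ)))]
  have harg : ((n:ℝ)+1)^2 + T^2 = (n:ℝ)^2 * ((1+1/(n:ℝ))^2 + T^2*(1/(n:ℝ))^2) := by
    field_simp
  rw [harg, Real.log_mul (by positivity) hinner.ne', Real.log_pow]
  push_cast
  ring_nf

lemma tendsto_u (T : ℝ) : Tendsto (fun n : ℕ => T/((n:ℝ)+1)) atTop (𝓝 0) := by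
  have h := tendsto_one_div_add_atTop_nhds_zero_nat.const_mul T
  rw [mul_zero] at h
  apply h.congr
  intro n
  ring

lemma tendsto_arctan_part (T : ℝ) :
    Tendsto (fun n : ℕ => Real.arctan (T/((n:ℝ)+1))) atTop (𝓝 0) := by
  have h := (Real.continuous_arctan.tendsto 0).comp (tendsto_u T)
  simpa [Function.comp_def] using h

lemma tendsto_mul_arctan (T : ℝ) :
    Tendsto (fun n : ℕ => ((n:ℝ)+1) * Real.arctan (T/((n:ℝ)+1))) atTop (𝓝 T) := by
  rcases eq_or_ne T 0 with rfl | hT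
  · simp
  have hslope : Tendsto (fun u : ℝ => Real.arctan u / u) (𝓝[≠] (0:ℝ)) (𝓝 1) := by
    have h := Real.hasDerivAt_arctan 0
    rw [hasDerivAt_iff_tendsto_slope] at h
    norm_num at h
    apply h.congr
    intro u
    rw [slope_def_field]
    simp
  have hmem : Tendsto (fun n : ℕ => T/((n:ℝ)+1)) atTop (𝓝[≠] (0:ℝ)) := by
    apply tendsto_nhdsWithin_of_tendsto_nhds_of_eventually_within _ (tendsto_u T)
    filter_upwards with n
    have : ((n:ℝ)+1) ≠ 0 := by positivity
    exact div_ne_zero hT this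
  have hcomp := (hslope.comp hmem).const_mul T
  rw [mul_one] at hcomp
  apply hcomp.congr
  intro n
  have hn : ((n:ℝ)+1) ≠ 0 := by positivity
  simp only [Function.comp]
  field_simp

lemma tendsto_imW (T : ℝ) :
    Tendsto (fun n : ℕ => T * Real.log n
        - ∑ j ∈ Finset.range (n+1), Real.arctan (T / ((j:ℝ)+1))) atTop (𝓝 (ImM T)) := by
  have hsum := (summable_emc T).hasSum.tendsto_sum_nat
  have base := (((tendsto_log_part T).sub (tendsto_mul_arctan T)).sub
    ((tendsto_arctan_part T).div_const 2)).sub hsum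
  have base2 := base.add_const (Real.arctan T / 2 + T/2*Real.log (1+T^2))
  have hval : ImM T = ((0 - T) - 0/2 - emC T) + (Real.arctan T / 2 + T/2*Real.log (1+T^2)) := by
    rw [ImM]; ring
  rw [hval]
  apply base2.congr
  intro n
  rw [sum_emc T n]
  simp only [emF, div_one, one_pow, one_mul]
  ring

lemma arg_of_re_pos (z : ℂ) (h : 0 < z.re) : z.arg = Real.arctan (z.im / z.re) := by
  have h1 : |z.arg| < π/2 := Complex.abs_arg_lt_pi_div_two_iff.mpr (Or.inl h)
  rw [← Complex.tan_arg, Real.arctan_tan (neg_lt_of_abs_lt h1) (lt_of_abs_lt h1)]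

noncomputable def Mfun (T : ℝ) : ℂ :=
  (Real.log (‖Complex.Gamma (1 + Complex.I * T)‖) : ℂ) + (ImM T : ℂ) * Complex.I

noncomputable def WA (T : ℝ) (n : ℕ) : ℂ :=
  (1 + Complex.I * T) * (Real.log n : ℂ) + (Real.log (n.factorial) : ℂ)
    - ∑ j ∈ Finset.range (n+1), Complex.log (1 + Complex.I * T + j)

lemma z_re (T : ℝ) (j : ℕ) : (1 + Complex.I * T + (j:ℂ)).re = (j:ℝ) + 1 := by
  simp
  ring

lemma z_im (T : ℝ) (j : ℕ) : (1 + Complex.I * T + (j:ℂ)).im = T := by simp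

lemma z_ne (T : ℝ) (j : ℕ) : (1 + Complex.I * T + (j:ℂ)) ≠ 0 := by
  intro h
  have := congrArg Complex.re h
  rw [z_re] at this
  simp at this
  have h0 : (0:ℝ) ≤ (j:ℝ) := Nat.cast_nonneg j
  linarith

lemma arg_z (T : ℝ) (j : ℕ) :
    (1 + Complex.I * T + (j:ℂ)).arg = Real.arctan (T / ((j:ℝ)+1)) := by
  have hpos : 0 < (1 + Complex.I * T + (j:ℂ)).re := by
    rw [z_re]; positivity
  rw [arg_of_re_pos _ hpos, z_re, z_im]

lemma exp_WA (T : ℝ) {n : ℕ} (hn : 1 ≤ n) :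
    Complex.exp (WA T n) = Complex.GammaSeq (1 + Complex.I * T) n := by
  have hn0 : (n:ℂ) ≠ 0 := Nat.cast_ne_zero.mpr (by omega)
  rw [WA, Complex.exp_sub, Complex.exp_add, Complex.exp_sum, Complex.GammaSeq]
  congr 1
  · congr 1
    · rw [Complex.cpow_def_of_ne_zero hn0, mul_comm]
      congr 1
      rw [← Complex.ofReal_natCast, Complex.ofReal_log (Nat.cast_nonneg n)]
    · rw [← Complex.ofReal_exp, Real.exp_log (by exact_mod_cast n.factorial_pos)]
      simp
  · exact Finset.prod_congr rfl fun j _ => Complex.exp_log (z_ne T j)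

lemma im_WA (T : ℝ) (n : ℕ) :
    (WA T n).im = T * Real.log n - ∑ j ∈ Finset.range (n+1), Real.arctan (T / ((j:ℝ)+1)) := by
  rw [WA]
  rw [Complex.sub_im, Complex.add_im]
  have h1 : ((1 + Complex.I * T) * (Real.log n : ℂ)).im = T * Real.log n := by
    rw [Complex.mul_im, Complex.ofReal_re, Complex.ofReal_im, mul_zero, zero_add]
    have h0 : (1 + Complex.I * T).im = T := by simp
    rw [h0]
  have h2 : ((Real.log (n.factorial) : ℝ) : ℂ).im = 0 := Complex.ofReal_im _
  have h3 : (∑ j ∈ Finset.range (n+1), Complex.log (1 + Complex.I * T + j)).im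
      = ∑ j ∈ Finset.range (n+1), Real.arctan (T / ((j:ℝ)+1)) := by
    rw [Complex.im_sum]
    exact Finset.sum_congr rfl fun j _ => by rw [Complex.log_im, arg_z]
  rw [h1, h2, h3, add_zero]

lemma Gamma_ne (T : ℝ) : Complex.Gamma (1 + Complex.I * T) ≠ 0 := by
  apply Complex.Gamma_ne_zero
  intro m h
  have h2 := congrArg Complex.re h
  simp at h2
  have h0 : (0:ℝ) ≤ (m:ℝ) := Nat.cast_nonneg m
  linarith

lemma re_WA (T : ℝ) {n : ℕ} (hn : 1 ≤ n) :
    (WA T n).re = Real.log (‖Complex.GammaSeq (1 + Complex.I * T) n‖) := by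
  rw [← exp_WA T hn, Complex.norm_exp, Real.log_exp]

open Filter Topology in
lemma tendsto_reWA (T : ℝ) : Tendsto (fun n : ℕ => (WA T n).re) atTop
    (𝓝 (Real.log (‖Complex.Gamma (1 + Complex.I * T)‖))) := by
  have h1 : Tendsto (fun n : ℕ => ‖Complex.GammaSeq (1 + Complex.I * T) n‖) atTop
      (𝓝 (‖Complex.Gamma (1 + Complex.I * T)‖)) :=
    (continuous_norm.tendsto _).comp (Complex.GammaSeq_tendsto_Gamma _)
  have hne : ‖Complex.Gamma (1 + Complex.I * T)‖ ≠ 0 :=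
    norm_ne_zero_iff.mpr (Gamma_ne T)
  have h2 := (Real.continuousAt_log hne).tendsto.comp h1
  apply h2.congr'
  filter_upwards [eventually_ge_atTop 1] with n hn
  exact (re_WA T hn).symm

open Filter Topology in
lemma tendsto_imWA (T : ℝ) :
    Tendsto (fun n : ℕ => (WA T n).im) atTop (𝓝 (ImM T)) := by
  apply (tendsto_imW T).congr
  intro n
  exact (im_WA T n).symm

open Filter Topology in
lemma tendsto_WA (T : ℝ) : Tendsto (fun n : ℕ => WA T n) atTop (𝓝 (Mfun T)) := by
  have hre := (Complex.continuous_ofReal.tendsto _).comp (tendsto_reWA T)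
  have him := ((Complex.continuous_ofReal.tendsto _).comp (tendsto_imWA T)).mul_const Complex.I
  have h := hre.add him
  apply h.congr
  intro n
  exact Complex.re_add_im (WA T n)

lemma exp_Mfun (T : ℝ) : Complex.exp (Mfun T) = Complex.Gamma (1 + Complex.I * T) := by
  have h1 : Filter.Tendsto (fun n : ℕ => Complex.exp (WA T n)) Filter.atTop
      (nhds (Complex.exp (Mfun T))) := (Complex.continuous_exp.tendsto _).comp (tendsto_WA T)
  have h2 : Filter.Tendsto (fun n : ℕ => Complex.exp (WA T n)) Filter.atTop
      (nhds (Complex.Gamma (1 + Complex.I * T))) := by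
    apply (Complex.GammaSeq_tendsto_Gamma (1 + Complex.I * T)).congr'
    filter_upwards [Filter.eventually_ge_atTop 1] with n hn
    exact (exp_WA T hn).symm
  exact tendsto_nhds_unique h1 h2

lemma arctan_nonneg' {x : ℝ} (hx : 0 ≤ x) : 0 ≤ Real.arctan x := by
  have := Real.arctan_strictMono.monotone hx
  simpa using this

lemma arctan_le_self' {x : ℝ} (hx : 0 ≤ x) : Real.arctan x ≤ x := by
  rcases eq_or_lt_of_le hx with rfl | hx'
  · simp
  have h1 : 0 < Real.arctan x := by
    have := Real.arctan_strictMono hx'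
    simpa using this
  have h2 : Real.arctan x < π / 2 := Real.arctan_lt_pi_div_two x
  have := Real.lt_tan h1 h2
  rw [Real.tan_arctan] at this
  linarith

lemma continuous_emF_T {x : ℝ} (hx : 1 ≤ x) : Continuous (fun T : ℝ => emF T x) := by
  unfold emF
  apply Continuous.add
  · exact continuous_const.mul (Real.continuous_arctan.comp (continuous_id.div_const x))
  · apply Continuous.mul (by fun_prop)
    apply Continuous.log (by fun_prop)
    intro T
    nlinarith

lemma continuous_emc_T {a : ℝ} (ha : 1 ≤ a) : Continuous (fun T : ℝ => emc T a) := by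
  unfold emc
  apply Continuous.sub
  · apply Continuous.div_const
    apply Continuous.add
    · exact Real.continuous_arctan.comp (continuous_id.div_const a)
    · exact Real.continuous_arctan.comp (continuous_id.div_const (a+1))
  · exact (continuous_emF_T (by linarith)).sub (continuous_emF_T ha)

lemma continuous_emC : Continuous emC := by
  rw [continuous_iff_continuousAt]
  intro T₀
  set B := |T₀| + 1 with hB_def
  have hB : 0 < B := by positivity
  have habs : |T₀| < B := by simp [hB_def]
  have hmem : Set.Icc (-B) B ∈ nhds T₀ := by
    apply Icc_mem_nhds
    · linarith [neg_abs_le T₀]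
    · linarith [le_abs_self T₀]
  refine ContinuousOn.continuousAt ?_ hmem
  apply continuousOn_tsum (u := fun k : ℕ => B / (2 * ((k:ℝ)+1)^2))
  · exact fun k => (continuous_emc_T (one_le_cast_add_one k)).continuousOn
  · apply ((summable_comparison B).congr)
    intro k
    rw [abs_of_pos hB]
  · intro k T hT
    rw [Real.norm_eq_abs]
    refine (abs_emc_le T (one_le_cast_add_one k)).trans ?_
    have hTB : |T| ≤ B := abs_le.mpr hT
    gcongr

lemma continuous_ImM : Continuous ImM := by
  unfold ImM
  apply Continuous.sub _ continuous_emC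
  apply Continuous.add
  · apply Continuous.add
    · fun_prop
    · apply Continuous.mul (by fun_prop)
      apply Continuous.log (by fun_prop)
      intro T
      nlinarith
  · exact Real.continuous_arctan.div_const 2

lemma z_ne2 (T : ℝ) (m : ℕ) : 1 + Complex.I * T ≠ -(m:ℂ) := by
  intro h
  have h2 := congrArg Complex.re h
  simp at h2
  have h0 : (0:ℝ) ≤ (m:ℝ) := Nat.cast_nonneg m
  linarith

lemma continuous_Mfun : Continuous Mfun := by
  unfold Mfun
  have hG : Continuous fun T : ℝ => Complex.Gamma (1 + Complex.I * T) := by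
    rw [continuous_iff_continuousAt]
    intro T
    have hmap : Continuous fun T : ℝ => 1 + Complex.I * T := by fun_prop
    have hd := Complex.differentiableAt_Gamma (1 + Complex.I * T) (z_ne2 T)
    exact ContinuousAt.comp (g := Complex.Gamma) (f := fun T : ℝ => 1 + Complex.I * T)
      (x := T) hd.continuousAt hmap.continuousAt
  apply Continuous.add
  · apply Complex.continuous_ofReal.comp
    apply Continuous.log (continuous_norm.comp hG)
    exact fun T => norm_ne_zero_iff.mpr (Gamma_ne T)
  · exact (Complex.continuous_ofReal.comp continuous_ImM).mul continuous_const

lemma Mfun_zero : Mfun 0 = 0 := by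
  have h1 : ImM 0 = 0 := by
    simp [ImM, emC, emc, emF]
  have h2 : Complex.Gamma (1 + Complex.I * 0) = 1 := by
    simp [Complex.Gamma_one]
  simp [Mfun, h1, h2]

open Complex Real in
theorem im_log_Gamma_asymptotic (L : ℝ → ℂ) (hL : Continuous L) (hL0 : L 0 = 0)
    (hexp : ∀ T : ℝ, Complex.exp (L T) = Complex.Gamma (1 + Complex.I * T)) :
    ∀ T : ℝ, 1 ≤ T →
      |(L T).im - (-T + T * Real.log T + π / 4)| ≤ 49 / (45 * T) := by
  have hpi := Real.pi_pos
  -- Step 1 : L = Mfun everywhere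
  have hint : ∀ T, ∃ n : ℤ, L T - Mfun T = n * (2 * π * Complex.I) := by
    intro T
    apply Complex.exp_eq_one_iff.mp
    rw [Complex.exp_sub, hexp T, exp_Mfun T, div_self (Gamma_ne T)]
  set g : ℝ → ℝ := fun T => (L T - Mfun T).im with hg_def
  have hgc : Continuous g := Complex.continuous_im.comp (hL.sub continuous_Mfun)
  have hg0 : g 0 = 0 := by simp [hg_def, hL0, Mfun_zero]
  have hgz : ∀ T, ∃ n : ℤ, g T = n * (2 * π) := by
    intro T
    obtain ⟨n, hn⟩ := hint T
    refine ⟨n, ?_⟩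
    rw [hg_def]
    simp only [hn]
    simp [Complex.mul_im]
  have hset : {T : ℝ | g T = 0} = Set.univ := by
    have hne : ({T : ℝ | g T = 0}).Nonempty := ⟨0, hg0⟩
    apply IsClopen.eq_univ _ hne
    constructor
    · exact isClosed_eq hgc continuous_const
    · have hopen : {T : ℝ | g T = 0} = g ⁻¹' (Set.Ioo (-(2*π)) (2*π)) := by
        ext T
        simp only [Set.mem_setOf_eq, Set.mem_preimage, Set.mem_Ioo]
        constructor
        · intro h
          rw [h]
          constructor <;> linarith
        · rintro ⟨h1, h2⟩
          obtain ⟨n, hn⟩ := hgz T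
          rw [hn] at h1 h2 ⊢
          have hn1 : -1 < (n:ℝ) := by nlinarith
          have hn2 : (n:ℝ) < 1 := by nlinarith
          have hn0 : n = 0 := by
            have ha : (-1:ℤ) < n := by exact_mod_cast hn1
            have hb : n < (1:ℤ) := by exact_mod_cast hn2
            omega
          rw [hn0]
          simp
      rw [hopen]
      exact isOpen_Ioo.preimage hgc
  have hLM : ∀ T : ℝ, L T = Mfun T := by
    intro T
    obtain ⟨n, hn⟩ := hint T
    have hgT : g T = 0 := by
      have := Set.eq_univ_iff_forall.mp hset T
      exact this
    obtain ⟨m, hm⟩ := hgz T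
    -- g T = (L T - Mfun T).im = n * 2π
    have him : (L T - Mfun T).im = (n:ℝ) * (2 * π) := by
      rw [hn]
      simp [Complex.mul_im]
    have hn0 : (n:ℝ) * (2 * π) = 0 := by
      rw [← him]
      exact hgT
    have : (n:ℝ) = 0 := by
      rcases mul_eq_zero.mp hn0 with h | h
      · exact h
      · linarith
    have : n = 0 := by exact_mod_cast this
    rw [this] at hn
    simp at hn
    linear_combination hn
  -- Step 2 : the estimate
  intro T hT
  have hT0 : (0:ℝ) < T := by linarith
  rw [hLM T]
  have him : (Mfun T).im = ImM T := by simp [Mfun]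
  rw [him]
  -- decompose
  have hlog : T / 2 * Real.log (1 + T^2) - T * Real.log T = T / 2 * Real.log (1 + 1/T^2) := by
    have harg : 1 + T^2 = T^2 * (1 + 1/T^2) := by field_simp; ring
    rw [harg, Real.log_mul (by positivity) (by positivity), Real.log_pow]
    push_cast
    ring
  have harctan : Real.arctan T / 2 - π / 4 = -(Real.arctan (1/T)) / 2 := by
    rw [one_div, Real.arctan_inv_of_pos hT0]
    ring
  have hP1 : 0 ≤ T / 2 * Real.log (1 + 1/T^2) := by
    apply mul_nonneg (by positivity)
    apply Real.log_nonneg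
    have : 0 ≤ 1/T^2 := by positivity
    linarith
  have hP2 : T / 2 * Real.log (1 + 1/T^2) ≤ 1 / (2*T) := by
    have hle : Real.log (1 + 1/T^2) ≤ 1/T^2 := by
      have := Real.log_le_sub_one_of_pos (x := 1 + 1/T^2) (by positivity)
      linarith
    calc T / 2 * Real.log (1 + 1/T^2) ≤ T / 2 * (1/T^2) := by
          apply mul_le_mul_of_nonneg_left hle (by positivity)
      _ = 1 / (2*T) := by field_simp
  have hQ1 : 0 ≤ Real.arctan (1/T) := arctan_nonneg' (by positivity)
  have hQ2 : Real.arctan (1/T) ≤ 1/T := arctan_le_self' (by positivity)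
  have hC1 : 0 ≤ emC T := emC_nonneg hT
  have hC2 : emC T ≤ 1 / (2*T) := emC_le hT
  have hkey : ImM T - (-T + T * Real.log T + π / 4)
      = T / 2 * Real.log (1 + 1/T^2) + (-(Real.arctan (1/T)) / 2) - emC T := by
    rw [← hlog, ← harctan, ImM]
    ring
  rw [hkey]
  have h49 : (1:ℝ)/T ≤ 49 / (45*T) := by
    rw [div_le_div_iff₀ (by positivity) (by positivity)]
    nlinarith
  have hhalf : (1:ℝ)/(2*T) + 1/(2*T) = 1/T := by
    rw [← add_div, div_eq_div_iff (by positivity) (by positivity)]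
    ring
  rw [abs_le]
  constructor <;> nlinarith
end
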